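/- Let {φ_i}_{i=1}^m (m ≥ 2) be pairwise linearly independent unit vectors in ℝ², all lying in the open first quadrant (both coordinates positive), so that the frame is not scalable. Let t = min_{i ≠ j} ⟨φ_i, φ_j⟩, and note 0 < t < 1. Then the infimum, over all nonnegative scalars c₁, …, c_m for which {c_iφ_i} still spans ℝ², of the condition number of the frame operator of {c_iφ_i} equals (1 + t)/(1 − t), and it is attained by scaling a pair φ_i, φ_j achieving the minimum inner product t to equal (unit) lengths and scaling all other vectors to zero. -/

import Mathlib

open scoped RealInnerProductSpace BigOperators

/-- The frame operator S(φ) = Σᵢ ⟪φ, ψᵢ⟫ • ψᵢ of a finite family in ℝ². -/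
noncomputable def frameOperator {m : ℕ} (ψ : Fin m → EuclideanSpace ℝ (Fin 2)) :
    EuclideanSpace ℝ (Fin 2) →L[ℝ] EuclideanSpace ℝ (Fin 2) :=
  ∑ i, (innerSL ℝ (ψ i)).smulRight (ψ i)

/-- The condition number of an operator: ratio of its largest to smallest eigenvalue. -/
noncomputable def condNum
    (S : EuclideanSpace ℝ (Fin 2) →L[ℝ] EuclideanSpace ℝ (Fin 2)) : ℝ :=
  sSup (spectrum ℝ S) / sInf (spectrum ℝ S)

lemma frame_matrix {m : ℕ} (ψ : Fin m → EuclideanSpace ℝ (Fin 2)) :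
    frameOperator ψ = Matrix.toEuclideanCLM (𝕜:=ℝ) (n:=Fin 2)
      (Matrix.of ![![∑ i, ψ i 0 * ψ i 0, ∑ i, ψ i 0 * ψ i 1],
                   ![∑ i, ψ i 0 * ψ i 1, ∑ i, ψ i 1 * ψ i 1]]) := by
  ext x k
  have h2 : ∀ y : EuclideanSpace ℝ (Fin 2),
      (Matrix.toEuclideanCLM (𝕜:=ℝ) (n:=Fin 2)
      (Matrix.of ![![∑ i, ψ i 0 * ψ i 0, ∑ i, ψ i 0 * ψ i 1],
                   ![∑ i, ψ i 0 * ψ i 1, ∑ i, ψ i 1 * ψ i 1]])) y k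
      = (Matrix.of ![![∑ i, ψ i 0 * ψ i 0, ∑ i, ψ i 0 * ψ i 1],
                   ![∑ i, ψ i 0 * ψ i 1, ∑ i, ψ i 1 * ψ i 1]]).mulVec y k := fun _ => rfl
  rw [h2]
  have h3 : ∀ (f : Fin m → EuclideanSpace ℝ (Fin 2)), (∑ i, f i) k = ∑ i, f i k :=
    fun f => by
      induction (Finset.univ : Finset (Fin m)) using Finset.induction_on with
      | empty => rfl
      | @insert _ _ h ih => rw [Finset.sum_insert h, Finset.sum_insert h, ← ih]; rfl
  simp only [frameOperator, ContinuousLinearMap.sum_apply, ContinuousLinearMap.smulRight_apply,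
    innerSL_apply_apply, PiLp.inner_apply, RCLike.inner_apply, starRingEnd_apply, star_trivial]
  rw [h3]
  simp only [PiLp.smul_apply, smul_eq_mul, Matrix.mulVec, dotProduct,
    Fin.sum_univ_two]
  fin_cases k <;>
  · simp only [Matrix.of_apply, Matrix.cons_val', Matrix.cons_val_zero, Matrix.cons_val_one,
      Matrix.head_cons, Matrix.empty_val', Matrix.cons_val_fin_one, Matrix.head_fin_const,
      Fin.mk_zero, Fin.mk_one, Fin.sum_univ_two, Fin.isValue, Finset.sum_mul]
    rw [← Finset.sum_add_distrib]
    exact Finset.sum_congr rfl fun i _ => by ring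

lemma condNum_formula (a b d : ℝ) :
    condNum (Matrix.toEuclideanCLM (𝕜:=ℝ) (n:=Fin 2) (Matrix.of ![![a,b],![b,d]]))
      = ((a+d) + Real.sqrt ((a-d)^2+4*b^2)) / ((a+d) - Real.sqrt ((a-d)^2+4*b^2)) := by
  set D := Real.sqrt ((a-d)^2+4*b^2) with hDdef
  have hD0 : 0 ≤ D := Real.sqrt_nonneg _
  have hD : D^2 = (a-d)^2+4*b^2 := Real.sq_sqrt (by positivity)
  have hspec : spectrum ℝ (Matrix.toEuclideanCLM (𝕜:=ℝ) (n:=Fin 2) (Matrix.of ![![a,b],![b,d]]))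
      = {((a+d)-D)/2, ((a+d)+D)/2} := by
    rw [AlgEquiv.spectrum_eq (Matrix.toEuclideanCLM (𝕜:=ℝ) (n:=Fin 2))]
    ext x
    rw [spectrum.mem_iff, Matrix.isUnit_iff_isUnit_det, isUnit_iff_ne_zero, not_ne_iff]
    have hdet : ((algebraMap ℝ (Matrix (Fin 2) (Fin 2) ℝ)) x - Matrix.of ![![a,b],![b,d]]).det
        = (x-a)*(x-d) - b*b := by
      simp [Matrix.det_fin_two, Matrix.algebraMap_matrix_apply]
    rw [hdet]
    have hfac : (x-a)*(x-d) - b*b = (x - ((a+d)-D)/2) * (x - ((a+d)+D)/2) := by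
      field_simp
      nlinarith [hD]
    rw [hfac, mul_eq_zero, sub_eq_zero, sub_eq_zero]
    simp [Set.mem_insert_iff]
  rw [condNum, hspec, csSup_pair, csInf_pair]
  have h1 : ((a+d)-D)/2 ⊔ ((a+d)+D)/2 = ((a+d)+D)/2 := sup_eq_right.mpr (by linarith)
  have h2 : ((a+d)-D)/2 ⊓ ((a+d)+D)/2 = ((a+d)-D)/2 := inf_eq_left.mpr (by linarith)
  rw [h1, h2, div_div_div_comm]
  norm_num

lemma condNum_frame {m : ℕ} (ψ : Fin m → EuclideanSpace ℝ (Fin 2)) (a b d : ℝ)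
    (ha : a = ∑ i, ψ i 0 * ψ i 0) (hb : b = ∑ i, ψ i 0 * ψ i 1)
    (hd : d = ∑ i, ψ i 1 * ψ i 1) :
    condNum (frameOperator ψ)
      = ((a+d) + Real.sqrt ((a-d)^2+4*b^2)) / ((a+d) - Real.sqrt ((a-d)^2+4*b^2)) := by
  rw [frame_matrix, ← ha, ← hb, ← hd, condNum_formula]

set_option maxHeartbeats 2000000 in
/-- For m ≥ 2 pairwise independent unit vectors in the open first quadrant with minimal
pairwise inner product t, one has 0 < t < 1, and the least condition number over all
nonnegative spanning scalings is (1+t)/(1−t), attained by keeping a minimizing pair at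
unit length and scaling all other vectors to zero. -/
theorem stmt_16 (m : ℕ) (hm : 2 ≤ m) (φ : Fin m → EuclideanSpace ℝ (Fin 2))
    (hunit : ∀ i, ‖φ i‖ = 1)
    (hquad : ∀ i, 0 < φ i 0 ∧ 0 < φ i 1)
    (hind : ∀ i j, i ≠ j → LinearIndependent ℝ ![φ i, φ j])
    (t : ℝ) (ht : IsLeast {s : ℝ | ∃ i j, i ≠ j ∧ s = ⟪φ i, φ j⟫} t) :
    0 < t ∧ t < 1 ∧
    IsLeast {r : ℝ | ∃ c : Fin m → ℝ, (∀ i, 0 ≤ c i) ∧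
        Submodule.span ℝ (Set.range fun i => c i • φ i) = ⊤ ∧
        r = condNum (frameOperator fun i => c i • φ i)} ((1 + t) / (1 - t)) ∧
    ∀ i j, i ≠ j → ⟪φ i, φ j⟫ = t →
      condNum (frameOperator fun l => (if l = i ∨ l = j then (1 : ℝ) else 0) • φ l)
        = (1 + t) / (1 - t) := by
  have hπ := Real.pi_pos
  -- basic coordinate facts
  have hnorm : ∀ i, φ i 0 ^ 2 + φ i 1 ^ 2 = 1 := by
    intro i
    have h := hunit i
    rw [EuclideanSpace.norm_eq] at h
    have h2 := Real.sqrt_eq_one.mp h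
    simpa [Fin.sum_univ_two, Real.norm_eq_abs, sq_abs] using h2
  have hinner : ∀ i j, ⟪φ i, φ j⟫ = φ i 0 * φ j 0 + φ i 1 * φ j 1 := by
    intro i j
    simp [PiLp.inner_apply, RCLike.inner_apply, Fin.sum_univ_two]; ring
  -- angles
  set θ : Fin m → ℝ := fun i => Real.arcsin (φ i 1) with hθdef
  have hy1 : ∀ i, φ i 1 ≤ 1 := by
    intro i; nlinarith [hnorm i, (hquad i).1, (hquad i).2]
  have hsin : ∀ i, Real.sin (θ i) = φ i 1 := fun i =>
    Real.sin_arcsin (by linarith [(hquad i).2]) (hy1 i)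
  have hcos : ∀ i, Real.cos (θ i) = φ i 0 := by
    intro i
    rw [hθdef, Real.cos_arcsin]
    rw [show 1 - φ i 1 ^ 2 = φ i 0 ^ 2 by linarith [hnorm i]]
    exact Real.sqrt_sq (hquad i).1.le
  have hθpos : ∀ i, 0 < θ i := fun i => Real.arcsin_pos.mpr (hquad i).2
  have hθlt : ∀ i, θ i < Real.pi / 2 := by
    intro i
    apply Real.arcsin_lt_pi_div_two.mpr
    nlinarith [hnorm i, (hquad i).1, (hquad i).2]
  have hinnercos : ∀ i j, ⟪φ i, φ j⟫ = Real.cos (θ i - θ j) := by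
    intro i j
    rw [hinner, Real.cos_sub, hcos, hcos, hsin, hsin]
  -- extremes
  obtain ⟨p, -, hp⟩ := Finset.exists_max_image (Finset.univ : Finset (Fin m)) θ
    ⟨⟨0, by omega⟩, Finset.mem_univ _⟩
  obtain ⟨q, -, hq⟩ := Finset.exists_min_image (Finset.univ : Finset (Fin m)) θ
    ⟨⟨0, by omega⟩, Finset.mem_univ _⟩
  have hp' : ∀ i, θ i ≤ θ p := fun i => hp i (Finset.mem_univ i)
  have hq' : ∀ i, θ q ≤ θ i := fun i => hq i (Finset.mem_univ i)
  have hφeq : ∀ i j, θ i = θ j → φ i = φ j := by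
    intro i j h
    have h0 : φ i 0 = φ j 0 := by rw [← hcos i, ← hcos j, h]
    have h1 : φ i 1 = φ j 1 := by rw [← hsin i, ← hsin j, h]
    ext k
    fin_cases k
    · exact h0
    · exact h1
  have hqp : θ q < θ p := by
    by_contra hcon
    push_neg at hcon
    have i0 : Fin m := ⟨0, by omega⟩
    have e : θ ⟨0, by omega⟩ = θ ⟨1, by omega⟩ :=
      le_antisymm (le_trans (hp' _) (le_trans hcon (hq' _)))
        (le_trans (hp' _) (le_trans hcon (hq' _)))
    have hne : (⟨0, by omega⟩ : Fin m) ≠ ⟨1, by omega⟩ := by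
      intro h
      have := congrArg Fin.val h
      norm_num at this
    have := (hind _ _ hne).injective
    have h01 : (![φ ⟨0, by omega⟩, φ ⟨1, by omega⟩] : Fin 2 → _) 0
        = ![φ ⟨0, by omega⟩, φ ⟨1, by omega⟩] 1 := by
      simp [hφeq _ _ e]
    exact absurd (this h01) (by norm_num)
  have hpq_ne : p ≠ q := fun h => absurd (h ▸ hqp) (lt_irrefl _)
  -- t = cos (θ p - θ q)
  have htcos : t = Real.cos (θ p - θ q) := by
    apply le_antisymm
    · exact ht.2 ⟨p, q, hpq_ne, (hinnercos p q).symm⟩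
    · obtain ⟨i, j, hij, hts⟩ := ht.1
      rw [hts, hinnercos]
      rw [← Real.cos_abs (θ i - θ j)]
      apply Real.cos_le_cos_of_nonneg_of_le_pi (abs_nonneg _)
        (by linarith [hθlt p, hθpos q])
      rw [abs_le]
      constructor
      · linarith [hp' j, hq' i]
      · linarith [hp' i, hq' j]
  have hαpos : 0 < θ p - θ q := by linarith
  have hαlt : θ p - θ q < Real.pi / 2 := by linarith [hθlt p, hθpos q]
  have h0t : 0 < t := by
    rw [htcos]
    exact Real.cos_pos_of_mem_Ioo ⟨by linarith, hαlt⟩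
  have ht1 : t < 1 := by
    rw [htcos, ← Real.cos_zero]
    exact Real.cos_lt_cos_of_nonneg_of_le_pi le_rfl (by linarith) hαpos
  -- the pair computation
  have pairCond : ∀ i j, i ≠ j → ⟪φ i, φ j⟫ = t →
      condNum (frameOperator fun l => (if l = i ∨ l = j then (1 : ℝ) else 0) • φ l)
        = (1 + t) / (1 - t) := by
    intro i j hij htij
    have hpairsum : ∀ f g : Fin m → ℝ,
        (∑ l, ((if l = i ∨ l = j then (1:ℝ) else 0) * f l)
          * ((if l = i ∨ l = j then (1:ℝ) else 0) * g l)) = f i * g i + f j * g j := by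
      intro f g
      have h1 : ∀ l, ((if l = i ∨ l = j then (1:ℝ) else 0) * f l)
          * ((if l = i ∨ l = j then (1:ℝ) else 0) * g l)
          = if l ∈ ({i, j} : Finset (Fin m)) then f l * g l else 0 := by
        intro l
        have hc : (l ∈ ({i, j} : Finset (Fin m))) = (l = i ∨ l = j) := by
          simp [Finset.mem_insert, Finset.mem_singleton]
        simp only [hc]
        split <;> ring
      rw [Finset.sum_congr rfl (fun l _ => h1 l), Fintype.sum_ite_mem, Finset.sum_pair hij]
    have happ : ∀ l k, ((if l = i ∨ l = j then (1:ℝ) else 0) • φ l) k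
        = (if l = i ∨ l = j then (1:ℝ) else 0) * φ l k := fun l k => rfl
    rw [condNum_frame _ (φ i 0 * φ i 0 + φ j 0 * φ j 0)
        (φ i 0 * φ i 1 + φ j 0 * φ j 1) (φ i 1 * φ i 1 + φ j 1 * φ j 1)
        (by simp only [happ]; exact (hpairsum (fun l => φ l 0) (fun l => φ l 0)).symm)
        (by simp only [happ]; exact (hpairsum (fun l => φ l 0) (fun l => φ l 1)).symm)
        (by simp only [happ]; exact (hpairsum (fun l => φ l 1) (fun l => φ l 1)).symm)]
    have hni := hnorm i
    have hnj := hnorm j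
    have htv : φ i 0 * φ j 0 + φ i 1 * φ j 1 = t := by rw [← hinner]; exact htij
    have hT : (φ i 0 * φ i 0 + φ j 0 * φ j 0) + (φ i 1 * φ i 1 + φ j 1 * φ j 1) = 2 := by
      nlinarith
    have hDsq : ((φ i 0 * φ i 0 + φ j 0 * φ j 0) - (φ i 1 * φ i 1 + φ j 1 * φ j 1))^2
        + 4*(φ i 0 * φ i 1 + φ j 0 * φ j 1)^2 = (2*t)^2 := by
      nlinarith [hni, hnj, htv, sq_nonneg (φ i 0 * φ j 1 - φ i 1 * φ j 0),
        sq_nonneg (φ i 0 * φ j 1 + φ i 1 * φ j 0)]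
    rw [hT, hDsq, Real.sqrt_sq (by linarith : (0:ℝ) ≤ 2*t)]
    rw [show (2:ℝ) + 2*t = 2*(1+t) by ring, show (2:ℝ) - 2*t = 2*(1-t) by ring,
      mul_div_mul_left _ _ (two_ne_zero)]
  refine ⟨h0t, ht1, ⟨?_, ?_⟩, pairCond⟩
  · -- membership
    obtain ⟨i0, j0, hij0, hts0⟩ := ht.1
    refine ⟨fun l => if l = i0 ∨ l = j0 then (1:ℝ) else 0, fun l => by positivity, ?_, ?_⟩
    · -- span is top
      apply top_unique
      rw [← (hind i0 j0 hij0).span_eq_top_of_card_eq_finrank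
        (by simp [finrank_euclideanSpace_fin])]
      apply Submodule.span_le.mpr
      rintro v ⟨k, rfl⟩
      fin_cases k
      · exact Submodule.subset_span ⟨i0, by simp⟩
      · exact Submodule.subset_span ⟨j0, by simp⟩
    · exact (pairCond i0 j0 hij0 hts0.symm).symm
  · -- lower bound
    rintro r ⟨c, hc0, hspan, hr⟩
    set ψ : Fin m → EuclideanSpace ℝ (Fin 2) := fun l => c l • φ l with hψdef
    have happ : ∀ l k, ψ l k = c l * φ l k := fun l k => rfl
    set A := ∑ l, ψ l 0 * ψ l 0 with hA
    set B := ∑ l, ψ l 0 * ψ l 1 with hB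
    set Dd := ∑ l, ψ l 1 * ψ l 1 with hDd
    have hrr : r = ((A+Dd) + Real.sqrt ((A-Dd)^2+4*B^2))
        / ((A+Dd) - Real.sqrt ((A-Dd)^2+4*B^2)) := by
      rw [hr]; exact condNum_frame ψ A B Dd hA hB hDd
    clear_value ψ A B Dd
    set D := Real.sqrt ((A-Dd)^2+4*B^2) with hDdef
    clear_value D
    have hD0 : 0 ≤ D := hDdef ▸ Real.sqrt_nonneg _
    have hsqnn : (0:ℝ) ≤ (A-Dd)^2+4*B^2 := by positivity
    have hDsq : D^2 = (A-Dd)^2+4*B^2 := by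
      rw [hDdef]; exact Real.sq_sqrt hsqnn
    have hA0 : 0 ≤ A := by
      rw [hA]; exact Finset.sum_nonneg fun l _ => mul_self_nonneg _
    have hDd0 : 0 ≤ Dd := by
      rw [hDd]; exact Finset.sum_nonneg fun l _ => mul_self_nonneg _
    -- quadratic-form zero implies zero vector
    have hzero : ∀ z0 z1 : ℝ, A*z0^2 + 2*B*(z0*z1) + Dd*z1^2 = 0 → z0 = 0 ∧ z1 = 0 := by
      intro z0 z1 hQ
      have hexp : ∑ l, (z0 * ψ l 0 + z1 * ψ l 1)^2
          = A*z0^2 + 2*B*(z0*z1) + Dd*z1^2 := by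
        calc ∑ l, (z0 * ψ l 0 + z1 * ψ l 1)^2
            = ∑ l, (ψ l 0 * ψ l 0 * z0^2 + (ψ l 0 * ψ l 1 * (2*(z0*z1))
              + ψ l 1 * ψ l 1 * z1^2)) := Finset.sum_congr rfl fun l _ => by ring
          _ = A*z0^2 + (B*(2*(z0*z1)) + Dd*z1^2) := by
              rw [Finset.sum_add_distrib, Finset.sum_add_distrib, ← Finset.sum_mul,
                ← Finset.sum_mul, ← Finset.sum_mul, ← hA, ← hB, ← hDd]
          _ = A*z0^2 + 2*B*(z0*z1) + Dd*z1^2 := by ring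
      have hall := (Finset.sum_eq_zero_iff_of_nonneg
        (fun l _ => sq_nonneg (z0 * ψ l 0 + z1 * ψ l 1))).mp (hexp.trans hQ)
      set z : EuclideanSpace ℝ (Fin 2) := (WithLp.equiv 2 (Fin 2 → ℝ)).symm ![z0, z1] with hz
      have hz0 : z 0 = z0 := rfl
      have hz1 : z 1 = z1 := rfl
      have hsp : Submodule.span ℝ (Set.range ψ) ≤ LinearMap.ker (innerSL ℝ z : EuclideanSpace ℝ (Fin 2) →ₗ[ℝ] ℝ) := by
        apply Submodule.span_le.mpr
        rintro v ⟨l, rfl⟩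
        have h0 : z0 * ψ l 0 + z1 * ψ l 1 = 0 :=
          pow_eq_zero_iff (n := 2) (by norm_num) |>.mp (hall l (Finset.mem_univ l))
        simp only [SetLike.mem_coe, LinearMap.mem_ker, ContinuousLinearMap.coe_coe, innerSL_apply_apply]
        rw [PiLp.inner_apply]
        simp only [RCLike.inner_apply, starRingEnd_apply, star_trivial, Fin.sum_univ_two]
        rw [hz0, hz1]
        linarith [h0]
      rw [hspan] at hsp
      have hzmem : z ∈ LinearMap.ker (innerSL ℝ z : EuclideanSpace ℝ (Fin 2) →ₗ[ℝ] ℝ) := hsp Submodule.mem_top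
      have hzz : ⟪z, z⟫ = 0 := hzmem
      have : z = 0 := inner_self_eq_zero.mp hzz
      constructor
      · rw [← hz0, this]; rfl
      · rw [← hz1, this]; rfl
    -- determinant is positive
    have hCS : B*B ≤ A*Dd := by
      have h2 := Finset.sum_mul_sq_le_sq_mul_sq Finset.univ (fun l => ψ l 0) (fun l => ψ l 1)
      have e1 : ∑ l, (ψ l 0)^2 = A := by
        rw [hA]; exact Finset.sum_congr rfl fun l _ => by ring
      have e2 : ∑ l, (ψ l 1)^2 = Dd := by
        rw [hDd]; exact Finset.sum_congr rfl fun l _ => by ring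
      calc B*B = (∑ l, ψ l 0 * ψ l 1)^2 := by rw [← hB]; ring
        _ ≤ (∑ l, (ψ l 0)^2) * (∑ l, (ψ l 1)^2) := h2
        _ = A*Dd := by rw [e1, e2]
    have hdetpos : B*B < A*Dd := by
      rcases lt_or_eq_of_le hCS with h | h
      · exact h
      · exfalso
        rcases eq_or_lt_of_le hDd0 with hD0' | hD0'
        · have hDdz : Dd = 0 := hD0'.symm
          have hBz : B = 0 := by nlinarith [hCS, hDdz]
          have := (hzero 0 1 (by rw [hBz, hDdz]; ring)).2
          norm_num at this
        · have := (hzero Dd (-B) (by linear_combination (-Dd) * h)).1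
          exact absurd this (ne_of_gt hD0')
    have hApos : 0 < A := by nlinarith [mul_self_nonneg B]
    have hDdpos : 0 < Dd := by nlinarith [mul_self_nonneg B]
    have hTpos : 0 < A + Dd := by linarith
    have hDT : D < A + Dd := by
      rw [hDdef, Real.sqrt_lt' hTpos]
      nlinarith [hdetpos]
    -- the angle bound : D ≥ t * (A + Dd)
    set X := Real.cos (θ p + θ q) with hX
    set Y := Real.sin (θ p + θ q) with hY
    have hterm : ∀ l, t * (ψ l 0 * ψ l 0 + ψ l 1 * ψ l 1)
        ≤ (ψ l 0 * ψ l 0 - ψ l 1 * ψ l 1)*X + 2*(ψ l 0 * ψ l 1)*Y := by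
      intro l
      have hcosge : t ≤ Real.cos (2*θ l - (θ p + θ q)) := by
        rw [htcos, ← Real.cos_abs (2*θ l - (θ p + θ q))]
        apply Real.cos_le_cos_of_nonneg_of_le_pi (abs_nonneg _)
          (by linarith [hθlt p, hθpos q])
        rw [abs_le]
        exact ⟨by linarith [hq' l, hp' l], by linarith [hp' l, hq' l]⟩
      have e1 : (φ l 0 * φ l 0 - φ l 1 * φ l 1)*X + 2*(φ l 0 * φ l 1)*Y
          = Real.cos (2*θ l - (θ p + θ q)) := by
        rw [Real.cos_sub, ← hX, ← hY, Real.cos_two_mul', Real.sin_two_mul,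
          hcos l, hsin l]
        ring
      have hxy := hnorm l
      have hw : 0 ≤ c l * c l := mul_self_nonneg _
      have lhs_eq : t * (ψ l 0 * ψ l 0 + ψ l 1 * ψ l 1) = (c l * c l) * t := by
        rw [happ, happ]
        linear_combination (t * (c l * c l)) * hxy
      have rhs_eq : (ψ l 0 * ψ l 0 - ψ l 1 * ψ l 1)*X + 2*(ψ l 0 * ψ l 1)*Y
          = (c l * c l) * ((φ l 0 * φ l 0 - φ l 1 * φ l 1)*X + 2*(φ l 0 * φ l 1)*Y) := by
        rw [happ, happ]; ring
      rw [lhs_eq, rhs_eq, e1]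
      exact mul_le_mul_of_nonneg_left hcosge hw
    have hsumterm : t * (A + Dd) ≤ (A - Dd)*X + 2*B*Y := by
      have h1 : ∑ l, t * (ψ l 0 * ψ l 0 + ψ l 1 * ψ l 1) = t * (A + Dd) := by
        rw [← Finset.mul_sum, Finset.sum_add_distrib, ← hA, ← hDd]
      have h2 : ∑ l, ((ψ l 0 * ψ l 0 - ψ l 1 * ψ l 1)*X + 2*(ψ l 0 * ψ l 1)*Y)
          = (A - Dd)*X + 2*B*Y := by
        rw [Finset.sum_add_distrib, ← Finset.sum_mul, ← Finset.sum_mul,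
          Finset.sum_sub_distrib, ← hA, ← hDd]
        have : ∑ l, 2*(ψ l 0 * ψ l 1) = 2*B := by rw [← Finset.mul_sum, ← hB]
        rw [this]
      rw [← h1, ← h2]
      exact Finset.sum_le_sum fun l _ => hterm l
    have hXY : X^2 + Y^2 = 1 := by rw [hX, hY]; exact Real.cos_sq_add_sin_sq _
    have htT : t * (A + Dd) ≤ D := by
      have h0 : 0 ≤ t * (A + Dd) := mul_nonneg h0t.le (by linarith)
      have h1 : (A - Dd)*X + 2*B*Y ≤ D := by
        rcases le_or_gt ((A - Dd)*X + 2*B*Y) 0 with h | h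
        · linarith
        · rw [hDdef, Real.le_sqrt h.le hsqnn]
          nlinarith [sq_nonneg ((A - Dd)*Y - 2*B*X), hXY]
      linarith
    -- conclude
    rw [hrr]
    rw [div_le_div_iff₀ (by linarith) (by linarith)]
    nlinarith [htT]
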